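/- Let g : ℝ≥0 × ℝⁿ → ℝⁿ be such that solutions of ẋ = g(t,x) exist uniquely on [t₀, ∞) for all initial conditions. Suppose there exists a C¹ function V : ℝ≥0 × ℝⁿ → ℝ, constants a₁, a₂, a₃ > 0, b > 0, c > 0, δ₁, δ₂ > 0 such that a₁‖x‖² ≤ V(t,x) ≤ a₂‖x‖² and ∂V/∂t + ∇ₓV · g(t,x) ≤ -a₃‖x‖² + b‖x‖e^{-δ₁(t-t₀)} + c·e^{-δ₂(t-t₀)} for all t ≥ t₀ and x ∈ ℝⁿ. Then every solution x(t) of ẋ = g(t,x) satisfies lim_{t→∞} x(t) = 0. -/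

import Mathlib

open Real Filter

set_option maxHeartbeats 2000000 in
/-- Lemma 2 of the paper: Lyapunov-type convergence criterion for time-varying systems
with sign-indefinite but exponentially-decaying-perturbed Lyapunov derivative. -/
theorem stmt2 {n : ℕ} (g : ℝ → EuclideanSpace ℝ (Fin n) → EuclideanSpace ℝ (Fin n))
    (t₀ : ℝ) (ht₀ : 0 ≤ t₀)
    (V : ℝ × EuclideanSpace ℝ (Fin n) → ℝ) (hV : ContDiff ℝ 1 V)
    (a₁ a₂ a₃ b c δ₁ δ₂ : ℝ)
    (ha₁ : 0 < a₁) (ha₂ : 0 < a₂) (ha₃ : 0 < a₃) (hb : 0 < b) (hc : 0 < c)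
    (hδ₁ : 0 < δ₁) (hδ₂ : 0 < δ₂)
    (hbound : ∀ t, t₀ ≤ t → ∀ x : EuclideanSpace ℝ (Fin n),
      a₁ * ‖x‖ ^ 2 ≤ V (t, x) ∧ V (t, x) ≤ a₂ * ‖x‖ ^ 2)
    (hder : ∀ t, t₀ ≤ t → ∀ x : EuclideanSpace ℝ (Fin n),
      fderiv ℝ V (t, x) (1, g t x) ≤
        -a₃ * ‖x‖ ^ 2 + b * ‖x‖ * Real.exp (-δ₁ * (t - t₀)) + c * Real.exp (-δ₂ * (t - t₀))) :
    ∀ x : ℝ → EuclideanSpace ℝ (Fin n),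
      (∀ t, t₀ ≤ t → HasDerivAt x (g t (x t)) t) →
      Tendsto x atTop (nhds 0) := by
  intro x hx
  -- constants
  set δ : ℝ := min δ₁ δ₂ with hδdef
  have hδ : 0 < δ := lt_min hδ₁ hδ₂
  set C : ℝ := b ^ 2 / (2 * a₃) + c with hCdef
  have hC : 0 < C := by positivity
  set k : ℝ := min (a₃ / (2 * a₂)) δ / 2 with hkdef
  have hk : 0 < k := by positivity
  have hmin : 0 < min (a₃ / (2 * a₂)) δ := lt_min (by positivity) hδ
  have hkδ : k < δ := by
    have h := min_le_right (a₃ / (2 * a₂)) δ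
    rw [hkdef]; linarith
  have hka : k ≤ a₃ / (2 * a₂) := by
    have h := min_le_left (a₃ / (2 * a₂)) δ
    rw [hkdef]; linarith
  -- the Lyapunov function along the solution
  set v : ℝ → ℝ := fun t => V (t, x t) with hvdef
  have hv : ∀ t, t₀ ≤ t →
      HasDerivAt v (fderiv ℝ V (t, x t) (1, g t (x t))) t := by
    intro t ht
    have hxt : HasDerivAt (fun s => (s, x s)) ((1 : ℝ), g t (x t)) t :=
      (hasDerivAt_id t).prodMk (hx t ht)
    exact ((hV.differentiable one_ne_zero (t, x t)).hasFDerivAt).comp_hasDerivAt t hxt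
  -- key differential inequality: v' + k v ≤ C e^{-δ (t - t₀)}
  have hkey : ∀ t, t₀ ≤ t →
      fderiv ℝ V (t, x t) (1, g t (x t)) + k * v t ≤ C * Real.exp (-δ * (t - t₀)) := by
    intro t ht
    obtain ⟨hv1, hv2⟩ := hbound t ht (x t)
    have hD := hder t ht (x t)
    set D : ℝ := fderiv ℝ V (t, x t) (1, g t (x t)) with hDdef
    set X : ℝ := ‖x t‖ with hXdef
    have hX0 : 0 ≤ X := norm_nonneg _
    set E1 : ℝ := Real.exp (-δ₁ * (t - t₀)) with hE1def
    set E2 : ℝ := Real.exp (-δ₂ * (t - t₀)) with hE2def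
    set E : ℝ := Real.exp (-δ * (t - t₀)) with hEdef
    have htt : 0 ≤ t - t₀ := by linarith
    have hE1sq : E1 ^ 2 ≤ E := by
      rw [hE1def, hEdef, sq, ← Real.exp_add]
      apply Real.exp_le_exp.mpr
      have hδle : δ ≤ δ₁ := min_le_left _ _
      nlinarith
    have hE2le : E2 ≤ E := by
      rw [hE2def, hEdef]
      apply Real.exp_le_exp.mpr
      have hδle : δ ≤ δ₂ := min_le_right _ _
      nlinarith
    have hE1pos : 0 < E1 := Real.exp_pos _
    have hAM : b * X * E1 ≤ a₃ / 2 * X ^ 2 + b ^ 2 / (2 * a₃) * E1 ^ 2 := by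
      rw [← mul_le_mul_iff_right₀ (show (0:ℝ) < 2 * a₃ by positivity)]
      have heq : 2 * a₃ * (a₃ / 2 * X ^ 2 + b ^ 2 / (2 * a₃) * E1 ^ 2)
          = a₃ ^ 2 * X ^ 2 + b ^ 2 * E1 ^ 2 := by field_simp
      rw [heq]
      nlinarith [sq_nonneg (a₃ * X - b * E1)]
    have hkv : k * v t ≤ a₃ / 2 * X ^ 2 := by
      have h1 : k * v t ≤ k * (a₂ * X ^ 2) := by
        exact mul_le_mul_of_nonneg_left hv2 hk.le
      have h2 : k * (2 * a₂) ≤ a₃ := by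
        rw [← le_div_iff₀ (by positivity)]
        exact hka
      nlinarith [mul_nonneg (sub_nonneg.mpr h2) (sq_nonneg X)]
    have h3 : b ^ 2 / (2 * a₃) * E1 ^ 2 ≤ b ^ 2 / (2 * a₃) * E :=
      mul_le_mul_of_nonneg_left hE1sq (by positivity)
    have h4 : c * E2 ≤ c * E := mul_le_mul_of_nonneg_left hE2le hc.le
    rw [hCdef]
    linarith
  -- the auxiliary monotone function
  set u : ℝ → ℝ := fun t =>
    v t * Real.exp (k * (t - t₀)) + C / (δ - k) * Real.exp (-(δ - k) * (t - t₀)) with hudef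
  have hu : ∀ t, t₀ ≤ t →
      HasDerivAt u
        (fderiv ℝ V (t, x t) (1, g t (x t)) * Real.exp (k * (t - t₀))
          + v t * (Real.exp (k * (t - t₀)) * k)
          + C / (δ - k) * (Real.exp (-(δ - k) * (t - t₀)) * (-(δ - k)))) t := by
    intro t ht
    have h1 : HasDerivAt (fun s : ℝ => k * (s - t₀)) k t := by
      simpa using ((hasDerivAt_id t).sub_const t₀).const_mul k
    have h2 : HasDerivAt (fun s : ℝ => -(δ - k) * (s - t₀)) (-(δ - k)) t := by
      simpa using ((hasDerivAt_id t).sub_const t₀).const_mul (-(δ - k))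
    exact ((hv t ht).mul h1.exp).add (h2.exp.const_mul _)
  have hxcont : ContinuousOn x (Set.Ici t₀) := fun t ht =>
    (hx t ht).continuousAt.continuousWithinAt
  have hucont : ContinuousOn u (Set.Ici t₀) := by
    apply ContinuousOn.add
    · exact (hV.continuous.comp_continuousOn (continuousOn_id.prodMk hxcont)).mul
        (Real.continuous_exp.comp (by continuity)).continuousOn
    · exact (continuous_const.mul (Real.continuous_exp.comp (by continuity))).continuousOn
  have hanti : AntitoneOn u (Set.Ici t₀) := by
    apply antitoneOn_of_deriv_nonpos (convex_Ici t₀) hucont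
    · rw [interior_Ici]
      exact fun t ht => ((hu t (le_of_lt ht)).differentiableAt).differentiableWithinAt
    · rw [interior_Ici]
      intro t ht
      rw [(hu t (le_of_lt ht)).deriv]
      have hkey' := hkey t (le_of_lt ht)
      set D : ℝ := fderiv ℝ V (t, x t) (1, g t (x t)) with hDdef
      have hEpos : (0 : ℝ) < Real.exp (k * (t - t₀)) := Real.exp_pos _
      have hEeq : Real.exp (-δ * (t - t₀)) * Real.exp (k * (t - t₀))
          = Real.exp (-(δ - k) * (t - t₀)) := by
        rw [← Real.exp_add]; ring_nf
      have hδk : δ - k ≠ 0 := by linarith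
      have h1 : (D + k * v t) * Real.exp (k * (t - t₀))
          ≤ C * Real.exp (-δ * (t - t₀)) * Real.exp (k * (t - t₀)) :=
        mul_le_mul_of_nonneg_right hkey' hEpos.le
      have h2 : C / (δ - k) * (Real.exp (-(δ - k) * (t - t₀)) * (-(δ - k)))
          = -(C * Real.exp (-(δ - k) * (t - t₀))) := by
        field_simp
      rw [mul_assoc, hEeq] at h1
      rw [h2]
      clear_value D
      nlinarith [h1]
  -- exponential decay of v
  have hvle : ∀ t, t₀ ≤ t → v t ≤ u t₀ * Real.exp (-(k * (t - t₀))) := by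
    intro t ht
    have h1 : u t ≤ u t₀ := hanti (Set.self_mem_Ici) ht ht
    have h2 : (0 : ℝ) ≤ C / (δ - k) * Real.exp (-(δ - k) * (t - t₀)) := by
      have : 0 < δ - k := by linarith
      positivity
    have h3 : v t * Real.exp (k * (t - t₀)) ≤ u t₀ := by
      have : v t * Real.exp (k * (t - t₀)) ≤ u t := by
        rw [hudef]; simp only; linarith
      linarith
    rw [Real.exp_neg]
    calc v t = v t * Real.exp (k * (t - t₀)) * (Real.exp (k * (t - t₀)))⁻¹ := by
          field_simp
      _ ≤ u t₀ * (Real.exp (k * (t - t₀)))⁻¹ := by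
          apply mul_le_mul_of_nonneg_right h3 (by positivity)
  -- squeeze ‖x t‖² to 0
  have hsq : Tendsto (fun t => ‖x t‖ ^ 2) atTop (nhds 0) := by
    have hlim : Tendsto (fun t => u t₀ / a₁ * Real.exp (-(k * (t - t₀)))) atTop (nhds 0) := by
      have h0 : Tendsto (fun t : ℝ => k * (t - t₀)) atTop atTop := by
        apply Tendsto.const_mul_atTop hk
        simpa [sub_eq_add_neg] using tendsto_atTop_add_const_right atTop (-t₀) tendsto_id
      have h2 : Tendsto (fun t : ℝ => Real.exp (-(k * (t - t₀)))) atTop (nhds 0) :=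
        Real.tendsto_exp_atBot.comp (tendsto_neg_atTop_atBot.comp h0)
      simpa using h2.const_mul (u t₀ / a₁)
    apply squeeze_zero' (Filter.eventually_atTop.mpr ⟨t₀, fun t ht => by positivity⟩)
      (Filter.eventually_atTop.mpr ⟨t₀, fun t ht => ?_⟩) hlim
    have h1 := (hbound t ht (x t)).1
    have h2 := hvle t ht
    have : a₁ * ‖x t‖ ^ 2 ≤ u t₀ * Real.exp (-(k * (t - t₀))) := le_trans h1 h2
    rw [div_mul_eq_mul_div, le_div_iff₀ ha₁]
    linarith [mul_comm (‖x t‖ ^ 2) a₁]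
  -- conclude
  rw [tendsto_zero_iff_norm_tendsto_zero]
  have := (Real.continuous_sqrt.tendsto 0).comp hsq
  simp only [Function.comp_def, Real.sqrt_zero] at this
  convert this using 2 with t
  · exact (Real.sqrt_sq (norm_nonneg _)).symm
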